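/- In the BLM model on a bipartite graph satisfying informative Seed-and-Snowballs connectivity (each newly added firm has two edges to already-determined workers with distinct productivities, and each newly added worker has an edge to an already-determined firm with nonzero slope), the parameters (α, a, b) are uniquely determined by {θ_{ij} : (i,j) ∈ O} under the normalization a_{j₀} = b_{j₀} = 1 at the seed firm j₀. -/

import Mathlib

/-- Firm sets of the informative Seed-and-Snowballs iteration for the BLM
model: a newly added firm must have edges to two already-reached workers with
distinct productivities, and workers are reached through firms with nonzero
slope. -/
def iSnowJ {W F : Type} (E : Set (W × F)) (j₀ : F) (α : W → ℝ) (b : F → ℝ) :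
    ℕ → Set F
  | 0 => {j₀}
  | n + 1 => iSnowJ E j₀ α b n ∪
      {j | ∃ i i' : W, α i ≠ α i' ∧
        (∃ j' ∈ iSnowJ E j₀ α b n, (i, j') ∈ E ∧ b j' ≠ 0) ∧
        (∃ j' ∈ iSnowJ E j₀ α b n, (i', j') ∈ E ∧ b j' ≠ 0) ∧
        (i, j) ∈ E ∧ (i', j) ∈ E}

/-- Worker sets of the informative Seed-and-Snowballs iteration: workers with
an edge to a reached firm with nonzero slope. -/
def iSnowI {W F : Type} (E : Set (W × F)) (j₀ : F) (α : W → ℝ) (b : F → ℝ)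
    (n : ℕ) : Set W :=
  {i | ∃ j ∈ iSnowJ E j₀ α b n, (i, j) ∈ E ∧ b j ≠ 0}

/-- In the BLM model on a graph satisfying informative
Seed-and-Snowballs connectivity, the parameters (α, a, b) are uniquely
determined by the observed θ's under the normalization a_{j₀} = b_{j₀} = 1. -/
theorem blm_identification {W F : Type} (E : Set (W × F)) (j₀ : F)
    (α α' : W → ℝ) (a a' b b' : F → ℝ)
    (hSS : ∃ N : ℕ, iSnowJ E j₀ α b N = Set.univ ∧ iSnowI E j₀ α b N = Set.univ)
    (hnorm_a : a j₀ = 1) (hnorm_b : b j₀ = 1)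
    (hnorm_a' : a' j₀ = 1) (hnorm_b' : b' j₀ = 1)
    (hθ : ∀ p ∈ E, a p.2 + b p.2 * α p.1 = a' p.2 + b' p.2 * α' p.1) :
    α = α' ∧ a = a' ∧ b = b' := by
  obtain ⟨N, hJ, hI⟩ := hSS
  have key : ∀ n : ℕ, ∀ j ∈ iSnowJ E j₀ α b n, a j = a' j ∧ b j = b' j := by
    intro n
    induction n with
    | zero =>
      intro j hj
      simp only [iSnowJ, Set.mem_singleton_iff] at hj
      subst hj
      exact ⟨by rw [hnorm_a, hnorm_a'], by rw [hnorm_b, hnorm_b']⟩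
    | succ n ih =>
      have hwork : ∀ i ∈ iSnowI E j₀ α b n, α i = α' i := by
        intro i ⟨j, hj, hij, hbj⟩
        obtain ⟨ha, hb⟩ := ih j hj
        have := hθ (i, j) hij
        simp only at this
        rw [ha, hb] at this
        have hb' : b' j ≠ 0 := hb ▸ hbj
        field_simp at this
        exact mul_left_cancel₀ hb' (add_left_cancel this)
      intro j hj
      rcases hj with hj | ⟨i, i', hne, hi, hi', hij, hi'j⟩
      · exact ih j hj
      · have h1 := hθ (i, j) hij
        have h2 := hθ (i', j) hi'j
        simp only at h1 h2
        have hne' : α' i ≠ α' i' := by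
          rw [← hwork i hi, ← hwork i' hi']; exact hne
        rw [hwork i hi] at h1
        rw [hwork i' hi'] at h2
        have hbb : b j = b' j := by
          have : b j * (α' i - α' i') = b' j * (α' i - α' i') := by ring_nf; linarith
          exact mul_right_cancel₀ (sub_ne_zero.mpr hne') this
        exact ⟨by rw [hbb] at h1; linarith, hbb⟩
  have hwork : ∀ i ∈ iSnowI E j₀ α b N, α i = α' i := by
    intro i ⟨j, hj, hij, hbj⟩
    obtain ⟨ha, hb⟩ := key N j hj
    have := hθ (i, j) hij
    simp only at this
    rw [ha, hb] at this
    have hb' : b' j ≠ 0 := hb ▸ hbj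
    field_simp at this
    exact mul_left_cancel₀ hb' (add_left_cancel this)
  refine ⟨funext fun i => hwork i (hI ▸ Set.mem_univ i),
    funext fun j => (key N j (hJ ▸ Set.mem_univ j)).1,
    funext fun j => (key N j (hJ ▸ Set.mem_univ j)).2⟩
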